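/- For any a ≠ 0, the function g_a(x) = x² - a·x/(1 + (x/a)²) is 0.5-strongly convex and 3.5-smooth: its second derivative satisfies 0.5 ≤ g_a''(x) ≤ 3.5 for all x ∈ ℝ. -/

import Mathlib

private lemma denom_pos (a : ℝ) (ha : a ≠ 0) (x : ℝ) : 0 < a ^ 2 + x ^ 2 := by
  have h1 : 0 < a ^ 2 := by positivity
  nlinarith [sq_nonneg x]

private lemma first_deriv (a : ℝ) (ha : a ≠ 0) (x : ℝ) :
    HasDerivAt (fun x : ℝ => x ^ 2 - a * x / (1 + (x / a) ^ 2))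
      (2 * x - a ^ 3 * (a ^ 2 - x ^ 2) / (a ^ 2 + x ^ 2) ^ 2) x := by
  have hfe : (fun x : ℝ => x ^ 2 - a * x / (1 + (x / a) ^ 2)) =
      fun x : ℝ => x ^ 2 - a ^ 3 * x / (a ^ 2 + x ^ 2) := by
    funext y
    have h : a ^ 2 + y ^ 2 ≠ 0 := (denom_pos a ha y).ne'
    field_simp
  rw [hfe]
  have h : a ^ 2 + x ^ 2 ≠ 0 := (denom_pos a ha x).ne'
  have h1 : HasDerivAt (fun x : ℝ => a ^ 3 * x) (a ^ 3) x := by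
    simpa using (hasDerivAt_id x).const_mul (a ^ 3)
  have h2 : HasDerivAt (fun x : ℝ => a ^ 2 + x ^ 2) (2 * x) x := by
    simpa using ((hasDerivAt_pow 2 x)).const_add (a ^ 2)
  have hd := (h1.fun_div h2 h)
  have hx : HasDerivAt (fun x : ℝ => x ^ 2) (2 * x) x := by
    simpa using hasDerivAt_pow 2 x
  have := hx.fun_sub hd
  refine this.congr_deriv ?_
  field_simp
  ring

private lemma second_deriv (a : ℝ) (ha : a ≠ 0) (x : ℝ) :
    deriv (deriv (fun x : ℝ => x ^ 2 - a * x / (1 + (x / a) ^ 2))) x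
      = 2 + 2 * a ^ 3 * x * (3 * a ^ 2 - x ^ 2) / (a ^ 2 + x ^ 2) ^ 3 := by
  have hd1 : deriv (fun x : ℝ => x ^ 2 - a * x / (1 + (x / a) ^ 2)) =
      fun x : ℝ => 2 * x - a ^ 3 * (a ^ 2 - x ^ 2) / (a ^ 2 + x ^ 2) ^ 2 := by
    funext y
    exact (first_deriv a ha y).deriv
  rw [hd1]
  have h : a ^ 2 + x ^ 2 ≠ 0 := (denom_pos a ha x).ne'
  have h2 : ((a ^ 2 + x ^ 2) ^ 2 : ℝ) ≠ 0 := pow_ne_zero 2 h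
  have hnum : HasDerivAt (fun x : ℝ => a ^ 3 * (a ^ 2 - x ^ 2)) (a ^ 3 * (-(2 * x))) x := by
    have : HasDerivAt (fun x : ℝ => a ^ 2 - x ^ 2) (-(2 * x)) x := by
      simpa using ((hasDerivAt_pow 2 x)).const_sub (a ^ 2)
    simpa using this.const_mul (a ^ 3)
  have hden : HasDerivAt (fun x : ℝ => (a ^ 2 + x ^ 2) ^ 2) (2 * (a ^ 2 + x ^ 2) * (2 * x)) x := by
    have hb : HasDerivAt (fun x : ℝ => a ^ 2 + x ^ 2) (2 * x) x := by
      simpa using ((hasDerivAt_pow 2 x)).const_add (a ^ 2)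
    have := hb.pow 2
    simpa [mul_comm, mul_assoc, mul_left_comm, Pi.pow_def] using this
  have hlin : HasDerivAt (fun x : ℝ => 2 * x) 2 x := by
    simpa using (hasDerivAt_id x).const_mul 2
  have hD := hlin.fun_sub (hnum.fun_div hden h2)
  rw [hD.deriv]
  field_simp
  ring

theorem stmt_2 (a : ℝ) (ha : a ≠ 0) (x : ℝ) :
    0.5 ≤ deriv (deriv (fun x : ℝ => x ^ 2 - a * x / (1 + (x / a) ^ 2))) x ∧
    deriv (deriv (fun x : ℝ => x ^ 2 - a * x / (1 + (x / a) ^ 2))) x ≤ 3.5 := by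
  rw [second_deriv a ha x]
  have hpos : (0 : ℝ) < (a ^ 2 + x ^ 2) ^ 3 := pow_pos (denom_pos a ha x) 3
  constructor
  · have key : 3 * (a ^ 2 + x ^ 2) ^ 3 + 4 * a ^ 3 * x * (3 * a ^ 2 - x ^ 2) ≥ 0 := by
      nlinarith [sq_nonneg (a + x), sq_nonneg (a - x), sq_nonneg (a * x), sq_nonneg (a ^ 2 - x ^ 2), sq_nonneg (a ^ 2 + 2 * a * x - x ^ 2), sq_nonneg (a ^ 2 - 2 * a * x - x ^ 2), sq_nonneg x, sq_nonneg a, sq_nonneg (x * (a + x)), sq_nonneg (x * (a - x)), sq_nonneg (a * (a + x)), sq_nonneg (a * (a - x))]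
    have := div_nonneg key.le hpos.le
    have h2 : 2 * a ^ 3 * x * (3 * a ^ 2 - x ^ 2) / (a ^ 2 + x ^ 2) ^ 3 ≥ -1.5 := by
      rw [ge_iff_le, le_div_iff₀ hpos]
      nlinarith [key]
    linarith
  · rw [← sub_nonneg]
    have key : 3 * (a ^ 2 + x ^ 2) ^ 3 - 4 * a ^ 3 * x * (3 * a ^ 2 - x ^ 2) ≥ 0 := by
      nlinarith [sq_nonneg (a + x), sq_nonneg (a - x), sq_nonneg (a * x), sq_nonneg (a ^ 2 - x ^ 2), sq_nonneg (a ^ 2 + 2 * a * x - x ^ 2), sq_nonneg (a ^ 2 - 2 * a * x - x ^ 2), sq_nonneg x, sq_nonneg a, sq_nonneg (x * (a + x)), sq_nonneg (x * (a - x)), sq_nonneg (a * (a + x)), sq_nonneg (a * (a - x))]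
    have h2 : 2 * a ^ 3 * x * (3 * a ^ 2 - x ^ 2) / (a ^ 2 + x ^ 2) ^ 3 ≤ 1.5 := by
      rw [div_le_iff₀ hpos]
      nlinarith [key]
    linarith
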